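/- (Abstract form of Theorem 2: offline PVar bounds the online DPO gradient.) Let π₁ and π₂ be probability measures on a measurable space Y, let r₁, r₂, r* : Y → ℝ be bounded measurable functions, and let g : Y → E be a measurable function into a real Banach space E with ‖g(y)‖ ≤ G for all y. Define p_k(y, y') = σ(r_k(y) − r_k(y')) for k = 1, 2, where σ is the sigmoid function, let V₂ = Var_{π₂⊗π₂}(p₂), and let Ξ = 2·sup_y |r₁(y) − r*(y)| + 2·sup_y |r₂(y) − r*(y)| + 6·TV(π₁ ⊗ π₁, π₂ ⊗ π₂). Then ‖∫ (1 − p₁(y, y'))·(g(y) − g(y')) d(π₁ ⊗ π₁)(y, y')‖ ≤ 3·G·(V₂ + Ξ)^{1/3}. -/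

import Mathlib

open MeasureTheory

/-- The sigmoid function `σ(z) = 1 / (1 + exp (-z))`. -/
noncomputable def sigmoid (z : ℝ) : ℝ := 1 / (1 + Real.exp (-z))

/-- Variance of a real-valued function: `∫ U² dμ - (∫ U dμ)²`. -/
noncomputable def Var {Ω : Type*} [MeasurableSpace Ω] (μ : Measure Ω) (U : Ω → ℝ) : ℝ :=
  (∫ ω, (U ω) ^ 2 ∂μ) - (∫ ω, U ω ∂μ) ^ 2

/-- Total variation distance: supremum over measurable sets of `|μ A - ν A|`. -/
noncomputable def tvDist {Ω : Type*} [MeasurableSpace Ω] (μ ν : Measure Ω) : ℝ :=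
  ⨆ A : {A : Set Ω // MeasurableSet A}, |(μ A.1).toReal - (ν A.1).toReal|

section SigmoidLemmas

lemma sigmoid_pos (z : ℝ) : 0 < sigmoid z := by
  unfold sigmoid; positivity

lemma sigmoid_le_one (z : ℝ) : sigmoid z ≤ 1 := by
  unfold sigmoid
  rw [div_le_one (by positivity)]
  nlinarith [Real.exp_pos (-z)]

lemma sigmoid_neg (z : ℝ) : sigmoid (-z) = 1 - sigmoid z := by
  unfold sigmoid
  rw [neg_neg]
  have h1 : (0:ℝ) < 1 + Real.exp (-z) := by positivity
  have h2 : (0:ℝ) < 1 + Real.exp z := by positivity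
  have hmul : Real.exp (-z) * Real.exp z = 1 := by
    rw [← Real.exp_add]; simp
  field_simp
  nlinarith [hmul]

lemma continuous_sigmoid' : Continuous sigmoid := by
  apply Continuous.div continuous_const
  · continuity
  · intro z; positivity

lemma hasDerivAt_sigmoid (z : ℝ) :
    HasDerivAt sigmoid (Real.exp (-z) / (1 + Real.exp (-z)) ^ 2) z := by
  have h0 : (1 : ℝ) + Real.exp (-z) ≠ 0 := by positivity
  have h1 : HasDerivAt (fun w : ℝ => 1 + Real.exp (-w)) (-Real.exp (-z)) z := by
    have h2 : HasDerivAt (fun w : ℝ => Real.exp (-w)) (-Real.exp (-z)) z := by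
      simpa using (hasDerivAt_neg z).exp
    simpa using h2.const_add 1
  have h2 := h1.inv h0
  have : sigmoid = fun w => (1 + Real.exp (-w))⁻¹ := by
    funext w; simp [sigmoid, one_div]
  rw [this]
  rw [neg_neg] at h2
  exact h2

lemma sigmoid_lipschitz (a b : ℝ) : |sigmoid a - sigmoid b| ≤ 4⁻¹ * |a - b| := by
  have key := Convex.norm_image_sub_le_of_norm_hasDerivWithin_le
    (f := sigmoid) (f' := fun z => Real.exp (-z) / (1 + Real.exp (-z)) ^ 2)
    (C := 4⁻¹) (s := Set.univ)
    (fun x _ => (hasDerivAt_sigmoid x).hasDerivWithinAt)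
    (fun x _ => by
      rw [Real.norm_eq_abs, abs_of_nonneg (by positivity)]
      rw [div_le_iff₀ (by positivity)]
      nlinarith [sq_nonneg (1 - Real.exp (-x)), Real.exp_pos (-x)])
    convex_univ (Set.mem_univ b) (Set.mem_univ a)
  simpa [Real.norm_eq_abs] using key

end SigmoidLemmas

section MeasureLemmas

variable {α : Type*} [MeasurableSpace α]

lemma integrable_of_bdd {μ : Measure α} [IsFiniteMeasure μ] {F : Type*}
    [NormedAddCommGroup F] {h : α → F} (hm : AEStronglyMeasurable h μ) {C : ℝ}
    (hb : ∀ x, ‖h x‖ ≤ C) : Integrable h μ :=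
  Integrable.mono' (integrable_const C) hm (Filter.Eventually.of_forall hb)

lemma integral_swap_prod (μ : Measure α) [SFinite μ] {F : Type*}
    [NormedAddCommGroup F] [NormedSpace ℝ F]
    (h : α × α → F) (hm : AEStronglyMeasurable h (μ.prod μ)) :
    ∫ x, h x ∂(μ.prod μ) = ∫ x, h (Prod.swap x) ∂(μ.prod μ) := by
  conv_lhs => rw [← Measure.prod_swap]
  rw [integral_map measurable_swap.aemeasurable]
  rw [Measure.prod_swap]
  exact hm

lemma tvDist_bddAbove (μ ν : Measure α) [IsProbabilityMeasure μ] [IsProbabilityMeasure ν] :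
    BddAbove (Set.range fun A : {A : Set α // MeasurableSet A} =>
      |(μ A.1).toReal - (ν A.1).toReal|) := by
  refine ⟨2, ?_⟩
  rintro x ⟨A, rfl⟩
  have h1 : (μ A.1).toReal ≤ 1 := by
    simpa using ENNReal.toReal_mono (by simp) (prob_le_one (μ := μ) (s := A.1))
  have h2 : (ν A.1).toReal ≤ 1 := by
    simpa using ENNReal.toReal_mono (by simp) (prob_le_one (μ := ν) (s := A.1))
  have h3 : 0 ≤ (μ A.1).toReal := ENNReal.toReal_nonneg
  have h4 : 0 ≤ (ν A.1).toReal := ENNReal.toReal_nonneg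
  rw [abs_sub_le_iff]; constructor <;> linarith

lemma tvDist_nonneg (μ ν : Measure α) [IsProbabilityMeasure μ] [IsProbabilityMeasure ν] :
    0 ≤ tvDist μ ν := by
  have := le_ciSup (tvDist_bddAbove μ ν) ⟨∅, MeasurableSet.empty⟩
  simp only [measure_empty] at this
  exact le_trans (by simp) this

lemma le_tvDist (μ ν : Measure α) [IsProbabilityMeasure μ] [IsProbabilityMeasure ν]
    {A : Set α} (hA : MeasurableSet A) :
    (μ A).toReal - (ν A).toReal ≤ tvDist μ ν :=
  le_trans (le_abs_self _) (le_ciSup (tvDist_bddAbove μ ν) ⟨A, hA⟩)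

lemma integral_le_integral_add_tv (μ ν : Measure α)
    [IsProbabilityMeasure μ] [IsProbabilityMeasure ν] {f : α → ℝ} (hf : Measurable f)
    (h0 : ∀ x, 0 ≤ f x) (h1 : ∀ x, f x ≤ 1) :
    ∫ x, f x ∂μ ≤ (∫ x, f x ∂ν) + tvDist μ ν := by
  set ρ : Measure α := μ + ν with hρ
  have hμρ : μ ≪ ρ := (Measure.le_add_right le_rfl).absolutelyContinuous
  have hνρ : ν ≪ ρ := (Measure.le_add_left le_rfl).absolutelyContinuous
  set dμ := μ.rnDeriv ρ with hdμ
  set dν := ν.rnDeriv ρ with hdν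
  have hdμm : Measurable dμ := μ.measurable_rnDeriv ρ
  have hdνm : Measurable dν := ν.measurable_rnDeriv ρ
  have hμd : ρ.withDensity dμ = μ := Measure.withDensity_rnDeriv_eq μ ρ hμρ
  have hνd : ρ.withDensity dν = ν := Measure.withDensity_rnDeriv_eq ν ρ hνρ
  set A := {x | dν x ≤ dμ x} with hAdef
  have hA : MeasurableSet A := measurableSet_le hdνm hdμm
  set F := fun x => ENNReal.ofReal (f x) with hFdef
  have hFm : Measurable F := ENNReal.measurable_ofReal.comp hf
  have hF1 : ∀ x, F x ≤ 1 := fun x => ENNReal.ofReal_le_one.mpr (h1 x)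
  have hμA : μ A = ∫⁻ x in A, dμ x ∂ρ := by rw [← hμd, withDensity_apply _ hA]
  have hνA : ν A = ∫⁻ x in A, dν x ∂ρ := by rw [← hνd, withDensity_apply _ hA]
  have hμint : ∫⁻ x, F x ∂μ = ∫⁻ x, dμ x * F x ∂ρ := by
    rw [← hμd, lintegral_withDensity_eq_lintegral_mul ρ hdμm hFm]; rfl
  have hνint : ∫⁻ x, F x ∂ν = ∫⁻ x, dν x * F x ∂ρ := by
    rw [← hνd, lintegral_withDensity_eq_lintegral_mul ρ hdνm hFm]; rfl
  have key : (∫⁻ x, F x ∂μ) + ν A ≤ (∫⁻ x, F x ∂ν) + μ A := by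
    rw [hμA, hνA, hμint, hνint]
    rw [← lintegral_add_compl (fun x => dμ x * F x) hA,
        ← lintegral_add_compl (fun x => dν x * F x) hA]
    have hA1 : (∫⁻ x in A, dμ x * F x ∂ρ) + (∫⁻ x in A, dν x ∂ρ)
        ≤ (∫⁻ x in A, dν x * F x ∂ρ) + (∫⁻ x in A, dμ x ∂ρ) := by
      rw [← lintegral_add_left (f := fun x => dμ x * F x) (hdμm.mul hFm),
        ← lintegral_add_left (f := fun x => dν x * F x) (hdνm.mul hFm)]
      refine setLIntegral_mono (by measurability) (fun x hx => ?_)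
      have hle : dν x ≤ dμ x := hx
      obtain ⟨d, hd⟩ : ∃ d, dμ x = dν x + d :=
        ⟨dμ x - dν x, by rw [add_comm]; exact (tsub_add_cancel_of_le hle).symm⟩
      rw [hd, add_mul]
      have hdF : d * F x ≤ d := by
        calc d * F x ≤ d * 1 := mul_le_mul_of_nonneg_left (hF1 x) (by positivity)
        _ = d := mul_one d
      calc dν x * F x + d * F x + dν x ≤ dν x * F x + d + dν x := by
            exact add_le_add (add_le_add le_rfl hdF) le_rfl
        _ = dν x * F x + (dν x + d) := by ring
    have hA2 : (∫⁻ x in Aᶜ, dμ x * F x ∂ρ) ≤ (∫⁻ x in Aᶜ, dν x * F x ∂ρ) := by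
      refine setLIntegral_mono (hdνm.mul hFm) (fun x hx => ?_)
      have : dμ x ≤ dν x := le_of_lt (lt_of_not_ge hx)
      exact mul_le_mul_of_nonneg_right this (by positivity)
    calc (∫⁻ x in A, dμ x * F x ∂ρ) + (∫⁻ x in Aᶜ, dμ x * F x ∂ρ) + (∫⁻ x in A, dν x ∂ρ)
        = ((∫⁻ x in A, dμ x * F x ∂ρ) + (∫⁻ x in A, dν x ∂ρ))
            + (∫⁻ x in Aᶜ, dμ x * F x ∂ρ) := by ring
      _ ≤ ((∫⁻ x in A, dν x * F x ∂ρ) + (∫⁻ x in A, dμ x ∂ρ))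
            + (∫⁻ x in Aᶜ, dν x * F x ∂ρ) := add_le_add hA1 hA2
      _ = (∫⁻ x in A, dν x * F x ∂ρ) + (∫⁻ x in Aᶜ, dν x * F x ∂ρ)
            + (∫⁻ x in A, dμ x ∂ρ) := by ring
  have hfinμ : ∫⁻ x, F x ∂μ ≤ 1 := by
    calc ∫⁻ x, F x ∂μ ≤ ∫⁻ _, 1 ∂μ := lintegral_mono hF1
      _ = 1 := by simp
  have hfinν : ∫⁻ x, F x ∂ν ≤ 1 := by
    calc ∫⁻ x, F x ∂ν ≤ ∫⁻ _, 1 ∂ν := lintegral_mono hF1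
      _ = 1 := by simp
  have hμAne : μ A ≠ ⊤ := measure_ne_top μ A
  have hνAne : ν A ≠ ⊤ := measure_ne_top ν A
  have hμFne : ∫⁻ x, F x ∂μ ≠ ⊤ := ne_top_of_le_ne_top (by simp) hfinμ
  have hνFne : ∫⁻ x, F x ∂ν ≠ ⊤ := ne_top_of_le_ne_top (by simp) hfinν
  have keyR : (∫⁻ x, F x ∂μ).toReal + (ν A).toReal
      ≤ (∫⁻ x, F x ∂ν).toReal + (μ A).toReal := by
    have := ENNReal.toReal_mono (by finiteness) key
    rwa [ENNReal.toReal_add hμFne hνAne, ENNReal.toReal_add hνFne hμAne] at this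
  have hμI : ∫ x, f x ∂μ = (∫⁻ x, F x ∂μ).toReal :=
    integral_eq_lintegral_of_nonneg_ae (Filter.Eventually.of_forall h0)
      hf.aestronglyMeasurable
  have hνI : ∫ x, f x ∂ν = (∫⁻ x, F x ∂ν).toReal :=
    integral_eq_lintegral_of_nonneg_ae (Filter.Eventually.of_forall h0)
      hf.aestronglyMeasurable
  have htv := le_tvDist μ ν hA
  rw [hμI, hνI]
  linarith

lemma sq_integral_le_integral_sq (μ : Measure α)
    [IsProbabilityMeasure μ] {f : α → ℝ} (hm : Measurable f) {C : ℝ}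
    (hb : ∀ x, |f x| ≤ C) : (∫ x, f x ∂μ) ^ 2 ≤ ∫ x, (f x) ^ 2 ∂μ := by
  have hf : Integrable f μ := integrable_of_bdd hm.aestronglyMeasurable
    (C := C) (fun x => by simpa [Real.norm_eq_abs] using hb x)
  have hf2 : Integrable (fun x => (f x) ^ 2) μ := integrable_of_bdd
    (hm.pow_const 2).aestronglyMeasurable (C := C ^ 2)
    (fun x => by
      rw [Real.norm_eq_abs, abs_pow]
      exact pow_le_pow_left₀ (abs_nonneg _) (hb x) 2)
  set m := ∫ x, f x ∂μ with hm'
  have hexp : ∫ x, (f x - m) ^ 2 ∂μ = (∫ x, (f x) ^ 2 ∂μ) - m ^ 2 := by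
    have heq : (fun x => (f x - m) ^ 2) = fun x => ((f x) ^ 2 - (2 * m) * f x) + m ^ 2 := by
      funext x; ring
    have hint1 : Integrable (fun x => (f x) ^ 2 - (2 * m) * f x) μ :=
      hf2.sub (hf.const_mul _)
    rw [heq, integral_add hint1 (integrable_const _),
      integral_sub hf2 (hf.const_mul _), integral_const_mul, integral_const]
    simp only [measure_univ, probReal_univ, smul_eq_mul, one_mul]
    ring
  have h0 : 0 ≤ ∫ x, (f x - m) ^ 2 ∂μ := integral_nonneg (fun x => sq_nonneg _)
  linarith [hexp ▸ h0]

end MeasureLemmas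

/-- Abstract form of Theorem 2: offline PVar bounds the online DPO gradient. -/
theorem offline_pvar_bounds_online_dpo_gradient {Y : Type*} [MeasurableSpace Y]
    {E : Type*} [NormedAddCommGroup E] [NormedSpace ℝ E] [CompleteSpace E]
    (π₁ π₂ : Measure Y) [IsProbabilityMeasure π₁] [IsProbabilityMeasure π₂]
    (r₁ r₂ rstar : Y → ℝ)
    (hr₁ : Measurable r₁) (hr₂ : Measurable r₂) (hrstar : Measurable rstar)
    (hb₁ : ∃ B, ∀ y, |r₁ y| ≤ B) (hb₂ : ∃ B, ∀ y, |r₂ y| ≤ B)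
    (hbstar : ∃ B, ∀ y, |rstar y| ≤ B)
    (g : Y → E) (hgm : StronglyMeasurable g) (G : ℝ) (hG : 0 ≤ G)
    (hgb : ∀ y, ‖g y‖ ≤ G) :
    ‖∫ yy : Y × Y, (1 - sigmoid (r₁ yy.1 - r₁ yy.2)) • (g yy.1 - g yy.2) ∂(π₁.prod π₁)‖ ≤
      3 * G *
        (Var (π₂.prod π₂) (fun yy => sigmoid (r₂ yy.1 - r₂ yy.2)) +
          (2 * (⨆ y, |r₁ y - rstar y|) + 2 * (⨆ y, |r₂ y - rstar y|) +
            6 * tvDist (π₁.prod π₁) (π₂.prod π₂))) ^ ((1 : ℝ) / 3) := by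
  obtain ⟨B₁, hB₁⟩ := hb₁
  obtain ⟨B₂, hB₂⟩ := hb₂
  obtain ⟨Bs, hBs⟩ := hbstar
  haveI hne : Nonempty Y := by
    by_contra h
    rw [not_nonempty_iff] at h
    have h1 : π₁ Set.univ = 1 := measure_univ
    rw [Set.univ_eq_empty_iff.mpr h, measure_empty] at h1
    exact zero_ne_one h1
  -- abbreviations
  set μ : Measure (Y × Y) := π₁.prod π₁ with hμdef
  set ν : Measure (Y × Y) := π₂.prod π₂ with hνdef
  set s₁ := ⨆ y, |r₁ y - rstar y| with hs₁def
  set s₂ := ⨆ y, |r₂ y - rstar y| with hs₂def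
  set T := tvDist μ ν with hTdef
  set V := Var ν (fun yy => sigmoid (r₂ yy.1 - r₂ yy.2)) with hVdef
  -- sup facts
  have hbdd₁ : BddAbove (Set.range fun y => |r₁ y - rstar y|) := by
    refine ⟨B₁ + Bs, ?_⟩
    rintro x ⟨y, rfl⟩
    calc |r₁ y - rstar y| ≤ |r₁ y| + |rstar y| := abs_sub _ _
      _ ≤ B₁ + Bs := add_le_add (hB₁ y) (hBs y)
  have hbdd₂ : BddAbove (Set.range fun y => |r₂ y - rstar y|) := by
    refine ⟨B₂ + Bs, ?_⟩
    rintro x ⟨y, rfl⟩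
    calc |r₂ y - rstar y| ≤ |r₂ y| + |rstar y| := abs_sub _ _
      _ ≤ B₂ + Bs := add_le_add (hB₂ y) (hBs y)
  have hle₁ : ∀ y, |r₁ y - rstar y| ≤ s₁ := fun y => le_ciSup hbdd₁ y
  have hle₂ : ∀ y, |r₂ y - rstar y| ≤ s₂ := fun y => le_ciSup hbdd₂ y
  have hs₁0 : 0 ≤ s₁ := le_trans (abs_nonneg _) (hle₁ (Classical.arbitrary Y))
  have hs₂0 : 0 ≤ s₂ := le_trans (abs_nonneg _) (hle₂ (Classical.arbitrary Y))
  have hT0 : 0 ≤ T := tvDist_nonneg μ ν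
  have h12 : ∀ y, |r₁ y - r₂ y| ≤ s₁ + s₂ := fun y => by
    calc |r₁ y - r₂ y| = |(r₁ y - rstar y) - (r₂ y - rstar y)| := by ring_nf
      _ ≤ |r₁ y - rstar y| + |r₂ y - rstar y| := abs_sub _ _
      _ ≤ s₁ + s₂ := add_le_add (hle₁ y) (hle₂ y)
  -- measurability and integrability
  have hq : Measurable (fun yy : Y × Y => sigmoid (r₁ yy.1 - r₁ yy.2)) :=
    continuous_sigmoid'.measurable.comp ((hr₁.comp measurable_fst).sub (hr₁.comp measurable_snd))
  have hp : Measurable (fun yy : Y × Y => sigmoid (r₂ yy.1 - r₂ yy.2)) :=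
    continuous_sigmoid'.measurable.comp ((hr₂.comp measurable_fst).sub (hr₂.comp measurable_snd))
  have hq01 : ∀ z : ℝ, 0 ≤ sigmoid z ∧ sigmoid z ≤ 1 :=
    fun z => ⟨(sigmoid_pos z).le, sigmoid_le_one z⟩
  have hΔm : StronglyMeasurable (fun yy : Y × Y => g yy.1 - g yy.2) :=
    (hgm.comp_measurable measurable_fst).sub (hgm.comp_measurable measurable_snd)
  have hΔb : ∀ yy : Y × Y, ‖g yy.1 - g yy.2‖ ≤ 2 * G := fun yy => by
    calc ‖g yy.1 - g yy.2‖ ≤ ‖g yy.1‖ + ‖g yy.2‖ := norm_sub_le _ _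
      _ ≤ 2 * G := by linarith [hgb yy.1, hgb yy.2]
  have hF₁m : AEStronglyMeasurable
      (fun yy : Y × Y => (1 - sigmoid (r₁ yy.1 - r₁ yy.2)) • (g yy.1 - g yy.2)) μ :=
    (((measurable_const.sub hq).stronglyMeasurable).smul hΔm).aestronglyMeasurable
  have hF₂m : AEStronglyMeasurable
      (fun yy : Y × Y => (sigmoid (r₁ yy.1 - r₁ yy.2)) • (g yy.1 - g yy.2)) μ :=
    ((hq.stronglyMeasurable).smul hΔm).aestronglyMeasurable
  have hF₁i : Integrable
      (fun yy : Y × Y => (1 - sigmoid (r₁ yy.1 - r₁ yy.2)) • (g yy.1 - g yy.2)) μ := by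
    refine integrable_of_bdd hF₁m (C := 2 * G) (fun yy => ?_)
    rw [norm_smul, Real.norm_eq_abs]
    have h1 : |1 - sigmoid (r₁ yy.1 - r₁ yy.2)| ≤ 1 := by
      rcases hq01 (r₁ yy.1 - r₁ yy.2) with ⟨ha, hb⟩
      rw [abs_le]; constructor <;> linarith
    calc |1 - sigmoid (r₁ yy.1 - r₁ yy.2)| * ‖g yy.1 - g yy.2‖
        ≤ 1 * (2 * G) := mul_le_mul h1 (hΔb yy) (norm_nonneg _) zero_le_one
      _ = 2 * G := one_mul _
  have hF₂i : Integrable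
      (fun yy : Y × Y => (sigmoid (r₁ yy.1 - r₁ yy.2)) • (g yy.1 - g yy.2)) μ := by
    refine integrable_of_bdd hF₂m (C := 2 * G) (fun yy => ?_)
    rw [norm_smul, Real.norm_eq_abs]
    have h1 : |sigmoid (r₁ yy.1 - r₁ yy.2)| ≤ 1 := by
      rcases hq01 (r₁ yy.1 - r₁ yy.2) with ⟨ha, hb⟩
      rw [abs_le]; constructor <;> linarith
    calc |sigmoid (r₁ yy.1 - r₁ yy.2)| * ‖g yy.1 - g yy.2‖
        ≤ 1 * (2 * G) := mul_le_mul h1 (hΔb yy) (norm_nonneg _) zero_le_one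
      _ = 2 * G := one_mul _
  have habs1 : ∀ z : ℝ, |1 - 2 * sigmoid z| ≤ 1 := fun z => by
    rcases hq01 z with ⟨ha, hb⟩
    rw [abs_le]; constructor <;> linarith
  have hq2i : Integrable (fun yy : Y × Y => |1 - 2 * sigmoid (r₁ yy.1 - r₁ yy.2)|) μ := by
    refine integrable_of_bdd ((measurable_const.sub (hq.const_mul 2)).abs.aestronglyMeasurable)
      (C := 1) (fun yy => ?_)
    · rw [Real.norm_eq_abs, abs_abs]
      exact habs1 _
  have hp2iμ : Integrable (fun yy : Y × Y => |1 - 2 * sigmoid (r₂ yy.1 - r₂ yy.2)|) μ := by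
    refine integrable_of_bdd ((measurable_const.sub (hp.const_mul 2)).abs.aestronglyMeasurable)
      (C := 1) (fun yy => ?_)
    · rw [Real.norm_eq_abs, abs_abs]
      exact habs1 _
  -- Step A: symmetrization
  have hswap := integral_swap_prod π₁ _ hF₁m
  have hswap_eq : (fun yy : Y × Y =>
      (1 - sigmoid (r₁ (Prod.swap yy).1 - r₁ (Prod.swap yy).2)) •
        (g (Prod.swap yy).1 - g (Prod.swap yy).2))
      = fun yy : Y × Y => -((sigmoid (r₁ yy.1 - r₁ yy.2)) • (g yy.1 - g yy.2)) := by
    funext yy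
    have h1 : sigmoid (r₁ yy.2 - r₁ yy.1) = 1 - sigmoid (r₁ yy.1 - r₁ yy.2) := by
      rw [← neg_sub (r₁ yy.1) (r₁ yy.2), sigmoid_neg]
    simp only [Prod.fst_swap, Prod.snd_swap, h1]
    rw [show (1 : ℝ) - (1 - sigmoid (r₁ yy.1 - r₁ yy.2)) = sigmoid (r₁ yy.1 - r₁ yy.2) by ring,
      show g yy.2 - g yy.1 = -(g yy.1 - g yy.2) by abel, smul_neg]
  rw [hswap_eq] at hswap
  have hdouble : (∫ yy : Y × Y, (1 - sigmoid (r₁ yy.1 - r₁ yy.2)) • (g yy.1 - g yy.2) ∂μ)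
      + (∫ yy : Y × Y, (1 - sigmoid (r₁ yy.1 - r₁ yy.2)) • (g yy.1 - g yy.2) ∂μ)
      = ∫ yy : Y × Y, (1 - 2 * sigmoid (r₁ yy.1 - r₁ yy.2)) • (g yy.1 - g yy.2) ∂μ := by
    nth_rewrite 2 [hswap]
    rw [integral_neg, ← sub_eq_add_neg, ← integral_sub hF₁i hF₂i]
    congr 1
    funext yy
    rw [← sub_smul]
    congr 1
    ring
  have hF₃i : Integrable
      (fun yy : Y × Y => (1 - 2 * sigmoid (r₁ yy.1 - r₁ yy.2)) • (g yy.1 - g yy.2)) μ := by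
    refine integrable_of_bdd
      ((((measurable_const.sub (hq.const_mul 2)).stronglyMeasurable).smul hΔm).aestronglyMeasurable)
      (C := 2 * G) (fun yy => ?_)
    rw [norm_smul, Real.norm_eq_abs]
    calc |1 - 2 * sigmoid (r₁ yy.1 - r₁ yy.2)| * ‖g yy.1 - g yy.2‖
        ≤ 1 * (2 * G) := mul_le_mul (habs1 _) (hΔb yy) (norm_nonneg _) zero_le_one
      _ = 2 * G := one_mul _
  have hIQ : ‖∫ yy : Y × Y, (1 - sigmoid (r₁ yy.1 - r₁ yy.2)) • (g yy.1 - g yy.2) ∂μ‖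
      ≤ G * ∫ yy : Y × Y, |1 - 2 * sigmoid (r₁ yy.1 - r₁ yy.2)| ∂μ := by
    have hnorm : ‖∫ yy : Y × Y, (1 - 2 * sigmoid (r₁ yy.1 - r₁ yy.2)) • (g yy.1 - g yy.2) ∂μ‖
        ≤ (∫ yy : Y × Y, |1 - 2 * sigmoid (r₁ yy.1 - r₁ yy.2)| ∂μ) * (2 * G) := by
      calc ‖∫ yy : Y × Y, (1 - 2 * sigmoid (r₁ yy.1 - r₁ yy.2)) • (g yy.1 - g yy.2) ∂μ‖
          ≤ ∫ yy : Y × Y, ‖(1 - 2 * sigmoid (r₁ yy.1 - r₁ yy.2)) • (g yy.1 - g yy.2)‖ ∂μ :=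
            norm_integral_le_integral_norm _
        _ ≤ ∫ yy : Y × Y, |1 - 2 * sigmoid (r₁ yy.1 - r₁ yy.2)| * (2 * G) ∂μ := by
            refine integral_mono hF₃i.norm (hq2i.mul_const _) (fun yy => ?_)
            rw [norm_smul, Real.norm_eq_abs]
            exact mul_le_mul_of_nonneg_left (hΔb yy) (abs_nonneg _)
        _ = (∫ yy : Y × Y, |1 - 2 * sigmoid (r₁ yy.1 - r₁ yy.2)| ∂μ) * (2 * G) :=
            integral_mul_const _ _
    have h2 : ‖(∫ yy : Y × Y, (1 - sigmoid (r₁ yy.1 - r₁ yy.2)) • (g yy.1 - g yy.2) ∂μ)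
        + (∫ yy : Y × Y, (1 - sigmoid (r₁ yy.1 - r₁ yy.2)) • (g yy.1 - g yy.2) ∂μ)‖
        = 2 * ‖∫ yy : Y × Y, (1 - sigmoid (r₁ yy.1 - r₁ yy.2)) • (g yy.1 - g yy.2) ∂μ‖ := by
      rw [← two_smul ℝ, norm_smul, Real.norm_eq_abs]
      norm_num
    rw [hdouble] at h2
    linarith [h2 ▸ hnorm, hnorm, h2.symm ▸ hnorm]
  -- bound the |1-2q| integral by 1
  have hQ1 : ∫ yy : Y × Y, |1 - 2 * sigmoid (r₁ yy.1 - r₁ yy.2)| ∂μ ≤ 1 := by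
    calc ∫ yy : Y × Y, |1 - 2 * sigmoid (r₁ yy.1 - r₁ yy.2)| ∂μ
        ≤ ∫ _ : Y × Y, (1 : ℝ) ∂μ := integral_mono hq2i (integrable_const 1) (fun yy => habs1 _)
      _ = 1 := by simp
  -- Step B: replace r₁ by r₂
  have hBstep : ∫ yy : Y × Y, |1 - 2 * sigmoid (r₁ yy.1 - r₁ yy.2)| ∂μ
      ≤ (∫ yy : Y × Y, |1 - 2 * sigmoid (r₂ yy.1 - r₂ yy.2)| ∂μ) + (s₁ + s₂) := by
    have hpt : ∀ yy : Y × Y, |1 - 2 * sigmoid (r₁ yy.1 - r₁ yy.2)|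
        ≤ |1 - 2 * sigmoid (r₂ yy.1 - r₂ yy.2)| + (s₁ + s₂) := by
      intro yy
      have hlip := sigmoid_lipschitz (r₁ yy.1 - r₁ yy.2) (r₂ yy.1 - r₂ yy.2)
      have habd : |(r₁ yy.1 - r₁ yy.2) - (r₂ yy.1 - r₂ yy.2)| ≤ 2 * (s₁ + s₂) := by
        calc |(r₁ yy.1 - r₁ yy.2) - (r₂ yy.1 - r₂ yy.2)|
            = |(r₁ yy.1 - r₂ yy.1) - (r₁ yy.2 - r₂ yy.2)| := by ring_nf
          _ ≤ |r₁ yy.1 - r₂ yy.1| + |r₁ yy.2 - r₂ yy.2| := abs_sub _ _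
          _ ≤ (s₁ + s₂) + (s₁ + s₂) := add_le_add (h12 yy.1) (h12 yy.2)
          _ = 2 * (s₁ + s₂) := by ring
      have hqp : |sigmoid (r₁ yy.1 - r₁ yy.2) - sigmoid (r₂ yy.1 - r₂ yy.2)| ≤ (s₁ + s₂) / 2 := by
        calc |sigmoid (r₁ yy.1 - r₁ yy.2) - sigmoid (r₂ yy.1 - r₂ yy.2)|
            ≤ 4⁻¹ * |(r₁ yy.1 - r₁ yy.2) - (r₂ yy.1 - r₂ yy.2)| := hlip
          _ ≤ 4⁻¹ * (2 * (s₁ + s₂)) := by linarith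
          _ = (s₁ + s₂) / 2 := by ring
      have := abs_sub_abs_le_abs_sub (1 - 2 * sigmoid (r₁ yy.1 - r₁ yy.2))
        (1 - 2 * sigmoid (r₂ yy.1 - r₂ yy.2))
      have heq : |(1 - 2 * sigmoid (r₁ yy.1 - r₁ yy.2)) - (1 - 2 * sigmoid (r₂ yy.1 - r₂ yy.2))|
          = 2 * |sigmoid (r₁ yy.1 - r₁ yy.2) - sigmoid (r₂ yy.1 - r₂ yy.2)| := by
        rw [show (1 - 2 * sigmoid (r₁ yy.1 - r₁ yy.2)) - (1 - 2 * sigmoid (r₂ yy.1 - r₂ yy.2))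
          = -2 * (sigmoid (r₁ yy.1 - r₁ yy.2) - sigmoid (r₂ yy.1 - r₂ yy.2)) by ring, abs_mul]
        norm_num
      rw [heq] at this
      linarith
    calc ∫ yy : Y × Y, |1 - 2 * sigmoid (r₁ yy.1 - r₁ yy.2)| ∂μ
        ≤ ∫ yy : Y × Y, (|1 - 2 * sigmoid (r₂ yy.1 - r₂ yy.2)| + (s₁ + s₂)) ∂μ :=
          integral_mono hq2i (hp2iμ.add (integrable_const _)) hpt
      _ = (∫ yy : Y × Y, |1 - 2 * sigmoid (r₂ yy.1 - r₂ yy.2)| ∂μ) + (s₁ + s₂) := by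
          rw [integral_add hp2iμ (integrable_const _), integral_const]
          simp
  -- Step C: change of measure
  have hCstep : ∫ yy : Y × Y, |1 - 2 * sigmoid (r₂ yy.1 - r₂ yy.2)| ∂μ
      ≤ (∫ yy : Y × Y, |1 - 2 * sigmoid (r₂ yy.1 - r₂ yy.2)| ∂ν) + T := by
    exact integral_le_integral_add_tv μ ν
      ((measurable_const.sub (hp.const_mul 2)).abs)
      (fun x => abs_nonneg _) (fun x => habs1 _)
  -- Step D: Cauchy-Schwarz on ν
  have hpiν : Integrable (fun yy : Y × Y => sigmoid (r₂ yy.1 - r₂ yy.2)) ν := by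
    refine integrable_of_bdd hp.aestronglyMeasurable (C := 1) (fun yy => ?_)
    rw [Real.norm_eq_abs, abs_of_pos (sigmoid_pos _)]
    exact sigmoid_le_one _
  have hp2iν : Integrable (fun yy : Y × Y => (sigmoid (r₂ yy.1 - r₂ yy.2)) ^ 2) ν := by
    refine integrable_of_bdd (hp.pow_const 2).aestronglyMeasurable (C := 1) (fun yy => ?_)
    rw [Real.norm_eq_abs, abs_pow, abs_of_pos (sigmoid_pos _)]
    calc sigmoid (r₂ yy.1 - r₂ yy.2) ^ 2 ≤ 1 ^ 2 :=
      pow_le_pow_left₀ (sigmoid_pos _).le (sigmoid_le_one _) 2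
      _ = 1 := one_pow 2
  have hmean : ∫ yy : Y × Y, sigmoid (r₂ yy.1 - r₂ yy.2) ∂ν = 1 / 2 := by
    have hswp := integral_swap_prod π₂ (fun yy : Y × Y => sigmoid (r₂ yy.1 - r₂ yy.2))
      hp.aestronglyMeasurable
    have heq : (fun yy : Y × Y => sigmoid (r₂ (Prod.swap yy).1 - r₂ (Prod.swap yy).2))
        = fun yy : Y × Y => 1 - sigmoid (r₂ yy.1 - r₂ yy.2) := by
      funext yy
      simp only [Prod.fst_swap, Prod.snd_swap]
      rw [← neg_sub (r₂ yy.1) (r₂ yy.2), sigmoid_neg]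
    rw [heq] at hswp
    have : ∫ yy : Y × Y, (1 - sigmoid (r₂ yy.1 - r₂ yy.2)) ∂ν
        = 1 - ∫ yy : Y × Y, sigmoid (r₂ yy.1 - r₂ yy.2) ∂ν := by
      rw [integral_sub (integrable_const 1) hpiν, integral_const]
      simp
    rw [this] at hswp
    linarith
  have hsqint : ∫ yy : Y × Y, (|1 - 2 * sigmoid (r₂ yy.1 - r₂ yy.2)|) ^ 2 ∂ν = 4 * V := by
    have heq : (fun yy : Y × Y => (|1 - 2 * sigmoid (r₂ yy.1 - r₂ yy.2)|) ^ 2)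
        = fun yy : Y × Y => (4 * (sigmoid (r₂ yy.1 - r₂ yy.2)) ^ 2
            - 4 * sigmoid (r₂ yy.1 - r₂ yy.2)) + 1 := by
      funext yy
      rw [sq_abs]
      ring
    have hint1 : Integrable (fun yy : Y × Y => 4 * (sigmoid (r₂ yy.1 - r₂ yy.2)) ^ 2
        - 4 * sigmoid (r₂ yy.1 - r₂ yy.2)) ν := (hp2iν.const_mul 4).sub (hpiν.const_mul 4)
    rw [heq, integral_add hint1 (integrable_const 1),
      integral_sub (hp2iν.const_mul 4) (hpiν.const_mul 4), integral_const_mul,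
      integral_const_mul, integral_const, hmean]
    have hVeq : V = (∫ yy : Y × Y, (sigmoid (r₂ yy.1 - r₂ yy.2)) ^ 2 ∂ν)
        - (∫ yy : Y × Y, sigmoid (r₂ yy.1 - r₂ yy.2) ∂ν) ^ 2 := rfl
    rw [hmean] at hVeq
    simp only [measure_univ, probReal_univ, smul_eq_mul, one_mul]
    rw [hVeq]
    ring
  have hcs : (∫ yy : Y × Y, |1 - 2 * sigmoid (r₂ yy.1 - r₂ yy.2)| ∂ν) ^ 2 ≤ 4 * V := by
    have := sq_integral_le_integral_sq ν
      (f := fun yy : Y × Y => |1 - 2 * sigmoid (r₂ yy.1 - r₂ yy.2)|)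
      ((measurable_const.sub (hp.const_mul 2)).abs) (C := 1)
      (fun x => by rw [abs_abs]; exact habs1 _)
    rw [hsqint] at this
    exact this
  have hV0 : 0 ≤ V := by nlinarith [sq_nonneg (∫ yy : Y × Y, |1 - 2 * sigmoid (r₂ yy.1 - r₂ yy.2)| ∂ν)]
  have hfν0 : 0 ≤ ∫ yy : Y × Y, |1 - 2 * sigmoid (r₂ yy.1 - r₂ yy.2)| ∂ν :=
    integral_nonneg (fun x => abs_nonneg _)
  have hDstep : ∫ yy : Y × Y, |1 - 2 * sigmoid (r₂ yy.1 - r₂ yy.2)| ∂ν ≤ 2 * Real.sqrt V := by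
    have h1 : ∫ yy : Y × Y, |1 - 2 * sigmoid (r₂ yy.1 - r₂ yy.2)| ∂ν ≤ Real.sqrt (4 * V) := by
      have := Real.sqrt_le_sqrt hcs
      rwa [Real.sqrt_sq hfν0] at this
    have h2 : Real.sqrt (4 * V) = 2 * Real.sqrt V := by
      rw [show (4 : ℝ) * V = 2 ^ 2 * V by ring, Real.sqrt_mul (by positivity) V,
        Real.sqrt_sq (by norm_num : (0:ℝ) ≤ 2)]
    linarith
  -- combine
  have hfinal1 : ‖∫ yy : Y × Y, (1 - sigmoid (r₁ yy.1 - r₁ yy.2)) • (g yy.1 - g yy.2) ∂μ‖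
      ≤ G * (2 * Real.sqrt V + (s₁ + s₂) + T) := by
    have hchain : ∫ yy : Y × Y, |1 - 2 * sigmoid (r₁ yy.1 - r₁ yy.2)| ∂μ
        ≤ 2 * Real.sqrt V + (s₁ + s₂) + T := by linarith
    calc ‖∫ yy : Y × Y, (1 - sigmoid (r₁ yy.1 - r₁ yy.2)) • (g yy.1 - g yy.2) ∂μ‖
        ≤ G * ∫ yy : Y × Y, |1 - 2 * sigmoid (r₁ yy.1 - r₁ yy.2)| ∂μ := hIQ
      _ ≤ G * (2 * Real.sqrt V + (s₁ + s₂) + T) := mul_le_mul_of_nonneg_left hchain hG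
  have hfinal2 : ‖∫ yy : Y × Y, (1 - sigmoid (r₁ yy.1 - r₁ yy.2)) • (g yy.1 - g yy.2) ∂μ‖
      ≤ G := by
    calc ‖∫ yy : Y × Y, (1 - sigmoid (r₁ yy.1 - r₁ yy.2)) • (g yy.1 - g yy.2) ∂μ‖
        ≤ G * ∫ yy : Y × Y, |1 - 2 * sigmoid (r₁ yy.1 - r₁ yy.2)| ∂μ := hIQ
      _ ≤ G * 1 := mul_le_mul_of_nonneg_left hQ1 hG
      _ = G := mul_one G
  -- final arithmetic
  set x := V + (2 * s₁ + 2 * s₂ + 6 * T) with hxdef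
  have hx0 : 0 ≤ x := by rw [hxdef]; linarith
  have hrpow0 : 0 ≤ x ^ ((1 : ℝ) / 3) := Real.rpow_nonneg hx0 _
  rcases le_or_gt 1 x with hx1 | hx1
  · have h13 : (1 : ℝ) ≤ x ^ ((1 : ℝ) / 3) := by
      have := Real.rpow_le_rpow (zero_le_one) hx1 (by norm_num : (0:ℝ) ≤ 1/3)
      rwa [Real.one_rpow] at this
    calc ‖∫ yy : Y × Y, (1 - sigmoid (r₁ yy.1 - r₁ yy.2)) • (g yy.1 - g yy.2) ∂μ‖
        ≤ G := hfinal2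
      _ ≤ 3 * G * x ^ ((1 : ℝ) / 3) := by nlinarith
  · have hsq : Real.sqrt V ≤ x ^ ((1 : ℝ) / 3) := by
      rcases eq_or_lt_of_le hV0 with h | h
      · rw [← h, Real.sqrt_zero]
        exact hrpow0
      · have hVx : V ≤ x := by rw [hxdef]; linarith
        have h1 : Real.sqrt V = V ^ ((1 : ℝ) / 2) := Real.sqrt_eq_rpow V
        have h2 : V ^ ((1 : ℝ) / 2) ≤ V ^ ((1 : ℝ) / 3) :=
          Real.rpow_le_rpow_of_exponent_ge h (by linarith) (by norm_num)
        have h3 : V ^ ((1 : ℝ) / 3) ≤ x ^ ((1 : ℝ) / 3) :=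
          Real.rpow_le_rpow hV0 hVx (by norm_num)
        rw [h1]; linarith
    have hlin : s₁ + s₂ + T ≤ x ^ ((1 : ℝ) / 3) := by
      have hle : s₁ + s₂ + T ≤ x := by rw [hxdef]; linarith
      rcases eq_or_lt_of_le hx0 with h | h
      · rw [← h, Real.zero_rpow (by norm_num : (1:ℝ)/3 ≠ 0)]
        linarith
      · have hxx : x ≤ x ^ ((1 : ℝ) / 3) := by
          have := Real.rpow_le_rpow_of_exponent_ge h (le_of_lt hx1) (by norm_num : (1:ℝ)/3 ≤ 1)
          rwa [Real.rpow_one] at this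
        linarith
    calc ‖∫ yy : Y × Y, (1 - sigmoid (r₁ yy.1 - r₁ yy.2)) • (g yy.1 - g yy.2) ∂μ‖
        ≤ G * (2 * Real.sqrt V + (s₁ + s₂) + T) := hfinal1
      _ ≤ G * (3 * x ^ ((1 : ℝ) / 3)) := mul_le_mul_of_nonneg_left (by linarith) hG
      _ = 3 * G * x ^ ((1 : ℝ) / 3) := by ring
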